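/- Let σ ∈ (0, 1/2) and let {p_k} ⊆ Ω be a damped Newton sequence: for every k, X(p_k) ≠ 0, DX(p_k) is invertible, v_k = −(DX(p_k))⁻¹ X(p_k), α_k = 2^{−j_k} where j_k is the least natural number j such that φ(p_k + 2^{−j} v_k) ≤ φ(p_k) − σ 2^{−j} ‖X(p_k)‖², and p_{k+1} = p_k + α_k v_k. Suppose p̄ ∈ Ω is an accumulation point of {p_k}, X is continuously differentiable on Ω, DX(p̄) is invertible, and DX is locally Lipschitz at p̄, i.e. there are L > 0 and δ_L > 0 with ‖DX(p) − DX(p̄)‖ ≤ L ‖p − p̄‖ for all p ∈ B_{δ_L}(p̄). Then {p_k} converges quadratically to p̄: p_k → p̄ and there exist C > 0 and k₀ such that ‖p_{k+1} − p̄‖ ≤ C ‖p_k − p̄‖² for all k ≥ k₀. -/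

import Mathlib

open Metric Filter

theorem mvt_seg {E : Type*} [NormedAddCommGroup E] [NormedSpace ℝ E]
    (X : E → E) (DX : E → (E →L[ℝ] E)) {x y : E}
    (hX : ∀ ξ ∈ segment ℝ x y, HasFDerivAt X (DX ξ) ξ)
    (A : E →L[ℝ] E) (C : ℝ)
    (hb : ∀ ξ ∈ segment ℝ x y, ‖DX ξ - A‖ ≤ C) :
    ‖X y - X x - A (y - x)‖ ≤ C * ‖y - x‖ := by
  have h := Convex.norm_image_sub_le_of_norm_hasFDerivWithin_le
    (f := fun z => X z - A z) (f' := fun ξ => DX ξ - A) (s := segment ℝ x y)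
    (fun ξ hξ => ((hX ξ hξ).sub (A.hasFDerivAt)).hasFDerivWithinAt)
    hb (convex_segment x y) (left_mem_segment ℝ x y) (right_mem_segment ℝ x y)
  have : X y - A y - (X x - A x) = X y - X x - A (y - x) := by
    rw [map_sub]; abel
  rwa [this] at h

set_option maxHeartbeats 4000000 in
/-- If a damped Newton sequence has an accumulation point `p̄`, `X` is
continuously differentiable, `DX p̄` is invertible and `DX` is locally Lipschitz at
`p̄`, then the sequence converges quadratically to `p̄`. -/
theorem damped_newton_global_quadratic_convergence {E : Type*}
    [NormedAddCommGroup E] [InnerProductSpace ℝ E] [FiniteDimensional ℝ E]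
    (Ω : Set E) (hΩ : IsOpen Ω) (X : E → E) (DX : E → (E →L[ℝ] E))
    (hX : ∀ q ∈ Ω, HasFDerivAt X (DX q) q)
    (hC1 : ContinuousOn DX Ω)
    (σ : ℝ) (hσ0 : 0 < σ) (hσ1 : σ < 1 / 2)
    (p v : ℕ → E) (j : ℕ → ℕ)
    (hpΩ : ∀ k, p k ∈ Ω)
    (hXk : ∀ k, X (p k) ≠ 0)
    (hIU : ∀ k, IsUnit (DX (p k)))
    (hv : ∀ k, v k = -(Ring.inverse (DX (p k)) (X (p k))))
    (harmijo : ∀ k, (1 / 2 : ℝ) * ‖X (p k + ((1 / 2 : ℝ) ^ j k) • v k)‖ ^ 2 ≤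
        (1 / 2 : ℝ) * ‖X (p k)‖ ^ 2 - σ * (1 / 2 : ℝ) ^ j k * ‖X (p k)‖ ^ 2)
    (hleast : ∀ k, ∀ i < j k,
        ¬ ((1 / 2 : ℝ) * ‖X (p k + ((1 / 2 : ℝ) ^ i) • v k)‖ ^ 2 ≤
          (1 / 2 : ℝ) * ‖X (p k)‖ ^ 2 - σ * (1 / 2 : ℝ) ^ i * ‖X (p k)‖ ^ 2))
    (hrec : ∀ k, p (k + 1) = p k + ((1 / 2 : ℝ) ^ j k) • v k)
    (pbar : E) (hpbar : pbar ∈ Ω)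
    (φs : ℕ → ℕ) (hmono : StrictMono φs)
    (hacc : Filter.Tendsto (p ∘ φs) Filter.atTop (nhds pbar))
    (hinv : IsUnit (DX pbar))
    (L : ℝ) (hL : 0 < L) (δL : ℝ) (hδL : 0 < δL)
    (hLip : ∀ q ∈ Metric.ball pbar δL, ‖DX q - DX pbar‖ ≤ L * ‖q - pbar‖) :
    Filter.Tendsto p Filter.atTop (nhds pbar) ∧
      ∃ C > 0, ∃ k₀ : ℕ, ∀ k ≥ k₀, ‖p (k + 1) - pbar‖ ≤ C * ‖p k - pbar‖ ^ 2 := by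
  classical
  obtain ⟨rΩ, hrΩpos, hrΩ⟩ : ∃ r > 0, ball pbar r ⊆ Ω := Metric.isOpen_iff.mp hΩ pbar hpbar
  have hXcont : ContinuousAt X pbar := (hX pbar hpbar).continuousAt
  -- the merit values
  set φq : ℕ → ℝ := fun k => (1 / 2 : ℝ) * ‖X (p k)‖ ^ 2 with hφqdef
  have hstep : ∀ k, φq (k + 1) ≤ φq k - σ * (1 / 2 : ℝ) ^ j k * ‖X (p k)‖ ^ 2 := by
    intro k
    have := harmijo k
    rw [← hrec k] at this
    exact this
  have hφ_anti : Antitone φq := by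
    apply antitone_nat_of_succ_le
    intro k
    have h0 : 0 ≤ σ * (1 / 2 : ℝ) ^ j k * ‖X (p k)‖ ^ 2 := by positivity
    linarith [hstep k]
  have hφconv : Tendsto φq atTop (nhds (⨅ i, φq i)) := by
    apply tendsto_atTop_ciInf hφ_anti
    refine ⟨0, ?_⟩
    rintro x ⟨k, rfl⟩
    positivity
  have ht0 : Tendsto (fun k => (1 / 2 : ℝ) ^ j k * ‖X (p k)‖ ^ 2) atTop (nhds 0) := by
    have h2 : Tendsto (fun k => φq (k + 1)) atTop (nhds (⨅ i, φq i)) :=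
      hφconv.comp (tendsto_add_atTop_nat 1)
    have hg : Tendsto (fun k => (φq k - φq (k + 1)) / σ) atTop (nhds 0) := by
      have := (hφconv.sub h2).div_const σ
      simpa using this
    apply squeeze_zero' (Eventually.of_forall fun k => by positivity)
      (Eventually.of_forall fun k => ?_) hg
    rw [le_div_iff₀ hσ0]
    nlinarith [hstep k]
  -- Step A : X pbar = 0
  have hX0 : X pbar = 0 := by
    by_contra hne
    set q : ℕ → E := fun k => p (φs k) with hqdef
    have hq : Tendsto q atTop (nhds pbar) := hacc
    have hqd : Tendsto (fun k => ‖q k - pbar‖) atTop (nhds 0) :=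
      tendsto_iff_norm_sub_tendsto_zero.mp hq
    have hXq : Tendsto (fun k => X (q k)) atTop (nhds (X pbar)) := hXcont.tendsto.comp hq
    have ha2 : Tendsto (fun k => ‖X (q k)‖ ^ 2) atTop (nhds (‖X pbar‖ ^ 2)) := hXq.norm.pow 2
    have hane : (‖X pbar‖ : ℝ) ^ 2 ≠ 0 := pow_ne_zero _ (norm_ne_zero_iff.mpr hne)
    have hα : Tendsto (fun k => (1 / 2 : ℝ) ^ j (φs k)) atTop (nhds 0) := by
      have h1 : Tendsto (fun k => (1 / 2 : ℝ) ^ j (φs k) * ‖X (q k)‖ ^ 2) atTop (nhds 0) :=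
        ht0.comp hmono.tendsto_atTop
      have h2 := h1.div ha2 hane
      rw [zero_div] at h2
      apply h2.congr
      intro k
      have : ‖X (q k)‖ ^ 2 ≠ 0 := pow_ne_zero _ (norm_ne_zero_iff.mpr (hXk (φs k)))
      simp only [Pi.div_apply]
      exact mul_div_cancel_right₀ _ this
    -- derivative limits along the subsequence
    have hDXq : Tendsto (fun k => DX (q k)) atTop (nhds (DX pbar)) := by
      rw [tendsto_iff_norm_sub_tendsto_zero]
      apply squeeze_zero' (Eventually.of_forall fun k => norm_nonneg _) ?_
        (by simpa using hqd.const_mul L)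
      filter_upwards [hq (ball_mem_nhds pbar hδL)] with k hk
      exact hLip (q k) hk
    have hinvc : ContinuousAt Ring.inverse (DX pbar) := by
      have := NormedRing.inverse_continuousAt hinv.unit
      rwa [IsUnit.unit_spec] at this
    have hBq : Tendsto (fun k => Ring.inverse (DX (q k))) atTop
        (nhds (Ring.inverse (DX pbar))) := hinvc.tendsto.comp hDXq
    have hw : Tendsto (fun k => v (φs k)) atTop
        (nhds (-(Ring.inverse (DX pbar) (X pbar)))) := by
      have happ := (isBoundedBilinearMap_apply.continuous.tendsto
        ((Ring.inverse (DX pbar)), X pbar)).comp (hBq.prodMk_nhds hXq)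
      have : Tendsto (fun k => Ring.inverse (DX (q k)) (X (q k))) atTop
          (nhds (Ring.inverse (DX pbar) (X pbar))) := happ
      simpa [hv] using this.neg
    -- eventually j ≥ 1 and step sizes
    have hj1 : ∀ᶠ k in atTop, 1 ≤ j (φs k) := by
      filter_upwards [hα (Iio_mem_nhds (show (0:ℝ) < 1 by norm_num))] with k hk
      have hk' : ((1:ℝ) / 2) ^ j (φs k) < 1 := hk
      rcases Nat.eq_zero_or_pos (j (φs k)) with h | h
      · rw [h, pow_zero] at hk'; norm_num at hk'
      · exact h
    have hβ2 : ∀ᶠ k in atTop, (1 / 2 : ℝ) ^ (j (φs k) - 1) = 2 * (1 / 2 : ℝ) ^ j (φs k) := by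
      filter_upwards [hj1] with k hk
      obtain ⟨m, hm⟩ : ∃ m, j (φs k) = m + 1 := ⟨j (φs k) - 1, (Nat.succ_pred_eq_of_pos hk).symm⟩
      rw [hm, Nat.add_sub_cancel, pow_succ]
      ring
    have hβ : Tendsto (fun k => (1 / 2 : ℝ) ^ (j (φs k) - 1)) atTop (nhds 0) := by
      apply Tendsto.congr' (EventuallyEq.symm hβ2)
      simpa using hα.const_mul 2
    have hε : Tendsto (fun k => L * (2 * ‖q k - pbar‖ +
        (1 / 2 : ℝ) ^ (j (φs k) - 1) * ‖v (φs k)‖) * ‖v (φs k)‖) atTop (nhds 0) := by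
      have := (((hqd.const_mul 2).add (hβ.mul hw.norm)).const_mul L).mul hw.norm
      simpa using this
    -- the main eventual inequality
    set a : ℕ → ℝ := fun k => ‖X (q k)‖ with hadef
    set β : ℕ → ℝ := fun k => (1 / 2 : ℝ) ^ (j (φs k) - 1) with hβdef
    set ε : ℕ → ℝ := fun k => L * (2 * ‖q k - pbar‖ + β k * ‖v (φs k)‖) * ‖v (φs k)‖ with hεdef
    have hεnn : ∀ k, 0 ≤ ε k := by
      intro k
      have : (0:ℝ) ≤ β k := by positivity
      have : (0:ℝ) ≤ 2 * ‖q k - pbar‖ + β k * ‖v (φs k)‖ := by positivity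
      positivity
    have hβpos : ∀ k, 0 < β k := fun k => by positivity
    have hβle : ∀ k, β k ≤ 1 := fun k =>
      pow_le_one₀ (by norm_num) (by norm_num)
    have hmain : ∀ᶠ k in atTop,
        (2 - β k) * a k ^ 2 - 2 * σ * a k ^ 2 ≤ 2 * (1 - β k) * a k * ε k + β k * ε k ^ 2 := by
      have hsmall : ∀ᶠ k in atTop,
          ‖q k - pbar‖ + β k * ‖v (φs k)‖ < min rΩ δL := by
        have hlim : Tendsto (fun k => ‖q k - pbar‖ + β k * ‖v (φs k)‖) atTop (nhds 0) := by
          have := hqd.add (hβ.mul hw.norm)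
          simpa using this
        exact hlim (Iio_mem_nhds (lt_min hrΩpos hδL))
      filter_upwards [hj1, hsmall] with k hk1 hksm
      -- abbreviations
      set qq := q k with hqq
      set ww := v (φs k) with hww
      set R := ‖qq - pbar‖ + β k * ‖ww‖ with hR
      have hRnn : (0:ℝ) ≤ R := by positivity
      have hballΩ : closedBall pbar R ⊆ Ω := fun x hx =>
        hrΩ (mem_ball.mpr (lt_of_le_of_lt (mem_closedBall.mp hx) (lt_of_lt_of_le hksm (min_le_left _ _))))
      have hballδ : closedBall pbar R ⊆ ball pbar δL := fun x hx =>
        mem_ball.mpr (lt_of_le_of_lt (mem_closedBall.mp hx) (lt_of_lt_of_le hksm (min_le_right _ _)))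
      have hq_mem : qq ∈ closedBall pbar R := by
        rw [mem_closedBall, dist_eq_norm]
        nlinarith [norm_nonneg ww, hβpos k]
      have hy_mem : qq + β k • ww ∈ closedBall pbar R := by
        rw [mem_closedBall, dist_eq_norm]
        have : qq + β k • ww - pbar = (qq - pbar) + β k • ww := by abel
        rw [this]
        calc ‖(qq - pbar) + β k • ww‖ ≤ ‖qq - pbar‖ + ‖β k • ww‖ := norm_add_le _ _
          _ ≤ R := by
              rw [norm_smul, Real.norm_eq_abs, abs_of_pos (hβpos k)]
      have hsegsub : segment ℝ qq (qq + β k • ww) ⊆ closedBall pbar R :=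
        (convex_closedBall pbar R).segment_subset hq_mem hy_mem
      have hmvt := mvt_seg X DX
        (x := qq) (y := qq + β k • ww)
        (fun ξ hξ => hX ξ (hballΩ (hsegsub hξ)))
        (DX qq) (L * (2 * ‖qq - pbar‖ + β k * ‖ww‖))
        (fun ξ hξ => by
          have hξb := hsegsub hξ
          have h1 : ‖DX ξ - DX pbar‖ ≤ L * ‖ξ - pbar‖ := hLip ξ (hballδ hξb)
          have h2 : ‖DX qq - DX pbar‖ ≤ L * ‖qq - pbar‖ := hLip qq (hballδ hq_mem)
          have h3 : ‖ξ - pbar‖ ≤ R := by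
            rw [← dist_eq_norm]; exact mem_closedBall.mp hξb
          calc ‖DX ξ - DX qq‖ ≤ ‖DX ξ - DX pbar‖ + ‖DX pbar - DX qq‖ := by
                have : DX ξ - DX qq = (DX ξ - DX pbar) + (DX pbar - DX qq) := by abel
                rw [this]; exact norm_add_le _ _
            _ ≤ L * ‖ξ - pbar‖ + L * ‖qq - pbar‖ := by
                rw [norm_sub_rev (DX pbar)]
                linarith
            _ ≤ L * (2 * ‖qq - pbar‖ + β k * ‖ww‖) := by nlinarith)
      have hyx : qq + β k • ww - qq = β k • ww := by abel
      rw [hyx, norm_smul, Real.norm_eq_abs, abs_of_pos (hβpos k)] at hmvt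
      -- DX qq (β • ww) = -(β • X qq)
      have hDXv : DX qq (β k • ww) = -(β k • X qq) := by
        rw [map_smul]
        have : DX qq ww = -(X qq) := by
          rw [hww, hv (φs k), map_neg]
          have : DX qq (Ring.inverse (DX qq) (X qq)) = X qq := by
            rw [← ContinuousLinearMap.mul_apply, Ring.mul_inverse_cancel _ (hIU (φs k))]
            rfl
          rw [hqq] at this ⊢
          rw [this]
        rw [this, smul_neg]
      have hnormbound : ‖X (qq + β k • ww)‖ ≤ (1 - β k) * a k + β k * ε k := by
        have hdecomp : X (qq + β k • ww) =
            (X (qq + β k • ww) - X qq - DX qq (β k • ww)) + (X qq - β k • X qq) := by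
          rw [hDXv]; abel
        rw [hdecomp]
        calc ‖(X (qq + β k • ww) - X qq - DX qq (β k • ww)) + (X qq - β k • X qq)‖
            ≤ ‖X (qq + β k • ww) - X qq - DX qq (β k • ww)‖ + ‖X qq - β k • X qq‖ :=
              norm_add_le _ _
          _ ≤ β k * ε k + (1 - β k) * a k := by
              have h1 : ‖X qq - β k • X qq‖ = (1 - β k) * a k := by
                have : X qq - β k • X qq = (1 - β k) • X qq := by
                  rw [sub_smul, one_smul]
                rw [this, norm_smul, Real.norm_eq_abs,
                  abs_of_nonneg (by linarith [hβle k])]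
              have h2 : L * (2 * ‖qq - pbar‖ + β k * ‖ww‖) * (β k * ‖ww‖) = β k * ε k := by
                rw [hεdef]; ring
              rw [h1]
              have := hmvt
              rw [h2] at this
              linarith
          _ = (1 - β k) * a k + β k * ε k := by ring
      -- Armijo failure at i = j - 1
      have hfail := hleast (φs k) (j (φs k) - 1) (Nat.sub_lt hk1 one_pos)
      push_neg at hfail
      have hfail' : (1/2 : ℝ) * a k ^ 2 - σ * β k * a k ^ 2 <
          (1/2 : ℝ) * ‖X (qq + β k • ww)‖ ^ 2 := hfail
      have hsq : ‖X (qq + β k • ww)‖ ^ 2 ≤ ((1 - β k) * a k + β k * ε k) ^ 2 := by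
        apply pow_le_pow_left₀ (norm_nonneg _) hnormbound
      have hann : 0 ≤ a k := norm_nonneg _
      nlinarith [hβpos k, hβle k, hεnn k, hann, hfail', hsq]
    -- pass to the limit
    have hlhs : Tendsto (fun k => (2 - β k) * a k ^ 2 - 2 * σ * a k ^ 2) atTop
        (nhds ((2 - 0) * ‖X pbar‖ ^ 2 - 2 * σ * ‖X pbar‖ ^ 2)) :=
      ((tendsto_const_nhds.sub hβ).mul ha2).sub (ha2.const_mul (2 * σ))
    have hrhs : Tendsto (fun k => 2 * (1 - β k) * a k * ε k + β k * ε k ^ 2) atTop (nhds 0) := by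
      have haq : Tendsto a atTop (nhds ‖X pbar‖) := hXq.norm
      have h1 : Tendsto (fun k => 2 * (1 - β k) * a k * ε k) atTop
          (nhds (2 * (1 - 0) * ‖X pbar‖ * 0)) :=
        ((tendsto_const_nhds.mul (tendsto_const_nhds.sub hβ)).mul haq).mul hε
      have h2 : Tendsto (fun k => β k * ε k ^ 2) atTop (nhds (0 * 0 ^ 2)) := hβ.mul (hε.pow 2)
      have := h1.add h2
      simpa using this
    have hfinal : (2 - 0) * ‖X pbar‖ ^ 2 - 2 * σ * ‖X pbar‖ ^ 2 ≤ 0 :=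
      le_of_tendsto_of_tendsto hlhs hrhs hmain
    have hA : 0 < ‖X pbar‖ ^ 2 := pow_pos (norm_pos_iff.mpr hne) 2
    nlinarith [hfinal, hA]
  -- Step B : local quadratic convergence
  have hinvc : ContinuousAt Ring.inverse (DX pbar) := by
    have := NormedRing.inverse_continuousAt hinv.unit
    rwa [IsUnit.unit_spec] at this
  obtain ⟨δ₂, hδ₂pos, hδ₂⟩ : ∃ δ > 0, ∀ A : E →L[ℝ] E, ‖A - DX pbar‖ < δ →
      ‖Ring.inverse A - Ring.inverse (DX pbar)‖ < 1 := by
    obtain ⟨δ, hδ, h⟩ := Metric.continuousAt_iff.mp hinvc 1 one_pos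
    refine ⟨δ, hδ, fun A hA => ?_⟩
    have := h (x := A) (by rwa [dist_eq_norm])
    rwa [dist_eq_norm] at this
  set B0 := Ring.inverse (DX pbar) with hB0
  set M := ‖B0‖ + 1 with hM
  set C₁ := ‖DX pbar‖ + 1 with hC₁
  set S := 1 + M * C₁ with hS
  set K := L * (S + 1) * M with hK
  have hMpos : 0 < M := by positivity
  have hC₁pos : 0 < C₁ := by positivity
  have hS1 : 1 ≤ S := by nlinarith
  have hSpos : 0 < S := by linarith
  have hKpos : 0 < K := by
    have : 0 < S + 1 := by linarith
    positivity
  have hσ' : 0 < 1 - 2 * σ := by linarith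
  set ρ := min (min (1 / L) (δ₂ / L)) (min (min (rΩ / S) (δL / S)) ((1 - 2 * σ) / (2 * K)))
    with hρ
  have hρpos : 0 < ρ := by
    apply lt_min (lt_min (by positivity) (by positivity))
      (lt_min (lt_min (by positivity) (by positivity)) (by positivity))
  have hρa : ρ ≤ 1 / L := le_trans (min_le_left _ _) (min_le_left _ _)
  have hρb : ρ ≤ δ₂ / L := le_trans (min_le_left _ _) (min_le_right _ _)
  have hρc : ρ ≤ rΩ / S := le_trans (min_le_right _ _) (le_trans (min_le_left _ _) (min_le_left _ _))
  have hρd : ρ ≤ δL / S := le_trans (min_le_right _ _) (le_trans (min_le_left _ _) (min_le_right _ _))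
  have hρe : ρ ≤ (1 - 2 * σ) / (2 * K) := le_trans (min_le_right _ _) (min_le_right _ _)
  have hLρ : L * ρ ≤ 1 := by rw [le_div_iff₀ hL] at hρa; linarith
  have hLρ2 : L * ρ ≤ δ₂ := by rw [le_div_iff₀ hL] at hρb; linarith
  have hSρ1 : S * ρ ≤ rΩ := by rw [le_div_iff₀ hSpos] at hρc; linarith
  have hSρ2 : S * ρ ≤ δL := by rw [le_div_iff₀ hSpos] at hρd; linarith
  have hKρ : 2 * K * ρ ≤ 1 - 2 * σ := by
    rw [le_div_iff₀ (by positivity : (0:ℝ) < 2 * K)] at hρe; linarith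
  clear_value B0 M C₁ S K ρ
  -- the key one-step estimate
  have key : ∀ k, ‖p k - pbar‖ < ρ →
      ‖p (k + 1) - pbar‖ ≤ K * ‖p k - pbar‖ ^ 2 ∧
        2 * ‖p (k + 1) - pbar‖ ≤ ‖p k - pbar‖ := by
    intro k hk
    have hXnz : X (p k) ≠ 0 := hXk k
    have hne : p k ≠ pbar := by
      intro h
      exact hXnz (by rw [h, hX0])
    set d := ‖p k - pbar‖ with hd
    have hdpos : 0 < d := norm_pos_iff.mpr (sub_ne_zero.mpr hne)
    have hdρ : d < ρ := hk
    clear_value d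
    have hballΩ : closedBall pbar (S * d) ⊆ Ω := by
      intro x hx
      apply hrΩ
      rw [mem_ball]
      calc dist x pbar ≤ S * d := mem_closedBall.mp hx
        _ < S * ρ := by nlinarith
        _ ≤ rΩ := hSρ1
    have hballδ : closedBall pbar (S * d) ⊆ ball pbar δL := by
      intro x hx
      rw [mem_ball]
      calc dist x pbar ≤ S * d := mem_closedBall.mp hx
        _ < S * ρ := by nlinarith
        _ ≤ δL := hSρ2
    have hdSd : d ≤ S * d := by nlinarith
    have hpball' : p k ∈ closedBall pbar d := by
      rw [mem_closedBall, dist_eq_norm, hd]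
    have hpbar' : pbar ∈ closedBall pbar d := mem_closedBall_self hdpos.le
    have hsegd : segment ℝ pbar (p k) ⊆ closedBall pbar d :=
      (convex_closedBall pbar d).segment_subset hpbar' hpball'
    have hdin : closedBall pbar d ⊆ closedBall pbar (S * d) :=
      closedBall_subset_closedBall hdSd
    have hLd : L * d ≤ 1 := by nlinarith
    -- (a) upper bound on ‖X (p k)‖
    have hXle : ‖X (p k)‖ ≤ C₁ * d := by
      have hmvt := mvt_seg X DX (x := pbar) (y := p k)
        (fun ξ hξ => hX ξ (hballΩ (hdin (hsegd hξ))))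
        0 C₁
        (fun ξ hξ => by
          have hlip := hLip ξ (hballδ (hdin (hsegd hξ)))
          have hnd : ‖ξ - pbar‖ ≤ d := by
            rw [← dist_eq_norm]; exact mem_closedBall.mp (hsegd hξ)
          have htri := norm_sub_norm_le (DX ξ) (DX pbar)
          have hLd' : L * ‖ξ - pbar‖ ≤ L * d := by nlinarith
          rw [sub_zero]
          rw [hC₁]
          linarith)
      rw [hX0] at hmvt
      rw [hd]
      simpa using hmvt
    -- inverse bound
    have hBinv : ‖Ring.inverse (DX (p k))‖ ≤ M := by
      have h1 : ‖DX (p k) - DX pbar‖ < δ₂ := by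
        have h0 := hLip (p k) (hballδ (hdin hpball'))
        calc ‖DX (p k) - DX pbar‖ ≤ L * d := by rw [hd]; exact h0
          _ < δ₂ := by nlinarith
      have h2 := hδ₂ _ h1
      have h3 := norm_sub_norm_le (Ring.inverse (DX (p k))) B0
      rw [hM]
      linarith
    -- Newton direction bounds
    have hvle : ‖v k‖ ≤ M * ‖X (p k)‖ := by
      rw [hv k, norm_neg]
      calc ‖Ring.inverse (DX (p k)) (X (p k))‖
          ≤ ‖Ring.inverse (DX (p k))‖ * ‖X (p k)‖ := ContinuousLinearMap.le_opNorm _ _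
        _ ≤ M * ‖X (p k)‖ := by nlinarith [norm_nonneg (X (p k))]
    have hvd : ‖v k‖ ≤ M * C₁ * d := by nlinarith
    have hyball : p k + v k ∈ closedBall pbar (S * d) := by
      rw [mem_closedBall, dist_eq_norm]
      have h0 : p k + v k - pbar = (p k - pbar) + v k := by abel
      rw [h0]
      calc ‖(p k - pbar) + v k‖ ≤ ‖p k - pbar‖ + ‖v k‖ := norm_add_le _ _
        _ ≤ d + M * C₁ * d := by rw [← hd]; linarith
        _ = S * d := by rw [hS]; ring
    have hseg2 : segment ℝ (p k) (p k + v k) ⊆ closedBall pbar (S * d) :=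
      (convex_closedBall _ _).segment_subset (hdin hpball') hyball
    have hDXb : ∀ ξ ∈ closedBall pbar (S * d), ‖DX ξ - DX (p k)‖ ≤ L * (S + 1) * d := by
      intro ξ hξ
      have h1 := hLip ξ (hballδ hξ)
      have h2 := hLip (p k) (hballδ (hdin hpball'))
      have h3 : ‖ξ - pbar‖ ≤ S * d := by rw [← dist_eq_norm]; exact mem_closedBall.mp hξ
      calc ‖DX ξ - DX (p k)‖ ≤ ‖DX ξ - DX pbar‖ + ‖DX pbar - DX (p k)‖ := by
            have h4 : DX ξ - DX (p k) = (DX ξ - DX pbar) + (DX pbar - DX (p k)) := by abel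
            rw [h4]; exact norm_add_le _ _
        _ ≤ L * (S * d) + L * d := by
            rw [norm_sub_rev (DX pbar)]
            have h5 : L * ‖ξ - pbar‖ ≤ L * (S * d) := by nlinarith
            rw [← hd] at h2
            linarith
        _ = L * (S + 1) * d := by ring
    have hDXv : DX (p k) (v k) = -(X (p k)) := by
      rw [hv k, map_neg]
      rw [← ContinuousLinearMap.mul_apply, Ring.mul_inverse_cancel _ (hIU k),
        ContinuousLinearMap.one_apply]
    have hXstep : ‖X (p k + v k)‖ ≤ K * d * ‖X (p k)‖ := by
      have hmvt := mvt_seg X DX (x := p k) (y := p k + v k)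
        (fun ξ hξ => hX ξ (hballΩ (hseg2 hξ)))
        (DX (p k)) (L * (S + 1) * d)
        (fun ξ hξ => hDXb ξ (hseg2 hξ))
      have hyx : p k + v k - p k = v k := by abel
      rw [hyx, hDXv] at hmvt
      have h6 : X (p k + v k) - X (p k) - -(X (p k)) = X (p k + v k) := by abel
      rw [h6] at hmvt
      calc ‖X (p k + v k)‖ ≤ L * (S + 1) * d * ‖v k‖ := hmvt
        _ ≤ L * (S + 1) * d * (M * ‖X (p k)‖) := by
            apply mul_le_mul_of_nonneg_left hvle
            have : (0:ℝ) < S + 1 := by linarith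
            positivity
        _ = K * d * ‖X (p k)‖ := by rw [hK]; ring
    have hKd : K * d ≤ (1 - 2 * σ) / 2 := by
      have h7 : K * d ≤ K * ρ := mul_le_mul_of_nonneg_left hdρ.le hKpos.le
      linarith
    have hacc0 : (1 / 2 : ℝ) * ‖X (p k + ((1 / 2 : ℝ) ^ (0:ℕ)) • v k)‖ ^ 2 ≤
        (1 / 2 : ℝ) * ‖X (p k)‖ ^ 2 - σ * (1 / 2 : ℝ) ^ (0:ℕ) * ‖X (p k)‖ ^ 2 := by
      rw [pow_zero, one_smul, mul_one]
      have hsq : ‖X (p k + v k)‖ ^ 2 ≤ (K * d * ‖X (p k)‖) ^ 2 :=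
        pow_le_pow_left₀ (norm_nonneg _) hXstep 2
      have hKd0 : 0 ≤ K * d := by positivity
      have h8 : (K * d) ^ 2 ≤ ((1 - 2 * σ) / 2) ^ 2 := pow_le_pow_left₀ hKd0 hKd 2
      have h9 : ((1 - 2 * σ) / 2) ^ 2 ≤ 1 - 2 * σ := by nlinarith [hσ0, hσ', sq_nonneg σ]
      have hKd2 : (K * d) ^ 2 ≤ 1 - 2 * σ := h8.trans h9
      have h11 : (K * d * ‖X (p k)‖) ^ 2 = (K * d) ^ 2 * ‖X (p k)‖ ^ 2 := by ring
      have h12 : (K * d) ^ 2 * ‖X (p k)‖ ^ 2 ≤ (1 - 2 * σ) * ‖X (p k)‖ ^ 2 :=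
        mul_le_mul_of_nonneg_right hKd2 (sq_nonneg _)
      rw [h11] at hsq
      have h10 : ‖X (p k + v k)‖ ^ 2 ≤ (1 - 2 * σ) * ‖X (p k)‖ ^ 2 := hsq.trans h12
      linarith
    have hj0 : j k = 0 := by
      by_contra h
      exact hleast k 0 (Nat.pos_of_ne_zero h) hacc0
    have hnext : p (k + 1) = p k + v k := by
      rw [hrec k, hj0, pow_zero, one_smul]
    have hquad : ‖p (k + 1) - pbar‖ ≤ K * d ^ 2 := by
      have hmvt := mvt_seg X DX (x := pbar) (y := p k)
        (fun ξ hξ => hX ξ (hballΩ (hdin (hsegd hξ))))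
        (DX (p k)) (L * (S + 1) * d)
        (fun ξ hξ => hDXb ξ (hdin (hsegd hξ)))
      rw [hX0] at hmvt
      simp only [sub_zero] at hmvt
      have hid : p (k + 1) - pbar = Ring.inverse (DX (p k)) (DX (p k) (p k - pbar) - X (p k)) := by
        rw [hnext, hv k, map_sub]
        rw [← ContinuousLinearMap.mul_apply, Ring.inverse_mul_cancel _ (hIU k),
          ContinuousLinearMap.one_apply]
        abel
      rw [hid]
      calc ‖Ring.inverse (DX (p k)) (DX (p k) (p k - pbar) - X (p k))‖
          ≤ ‖Ring.inverse (DX (p k))‖ * ‖DX (p k) (p k - pbar) - X (p k)‖ :=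
            ContinuousLinearMap.le_opNorm _ _
        _ ≤ M * (L * (S + 1) * d * d) := by
            rw [norm_sub_rev]
            apply mul_le_mul hBinv ?_ (norm_nonneg _) hMpos.le
            rw [← hd] at hmvt
            exact hmvt
        _ = K * d ^ 2 := by rw [hK]; ring
    refine ⟨hquad, ?_⟩
    have hhalf : K * d ^ 2 ≤ d / 2 := by nlinarith
    linarith
  -- entering the ball and staying there
  have hball : ∀ᶠ n in atTop, ‖p (φs n) - pbar‖ < ρ := by
    filter_upwards [hacc (ball_mem_nhds pbar hρpos)] with n hn
    rw [← dist_eq_norm]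
    exact hn
  obtain ⟨N, hN⟩ := hball.exists
  set N0 := φs N with hN0
  have hind : ∀ m, ‖p (N0 + m) - pbar‖ < ρ ∧
      ‖p (N0 + m) - pbar‖ ≤ (1 / 2 : ℝ) ^ m * ‖p N0 - pbar‖ := by
    intro m
    induction m with
    | zero => simpa using hN
    | succ m ih =>
      obtain ⟨ih1, ih2⟩ := ih
      obtain ⟨hq, hh⟩ := key (N0 + m) ih1
      have e : N0 + (m + 1) = (N0 + m) + 1 := rfl
      rw [e]
      constructor
      · have h1 : ‖p ((N0 + m) + 1) - pbar‖ ≤ ‖p (N0 + m) - pbar‖ := by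
          linarith [norm_nonneg (p (N0 + m) - pbar)]
        exact lt_of_le_of_lt h1 ih1
      · have h2 : ‖p ((N0 + m) + 1) - pbar‖ ≤ ‖p (N0 + m) - pbar‖ / 2 := by linarith
        calc ‖p ((N0 + m) + 1) - pbar‖ ≤ ‖p (N0 + m) - pbar‖ / 2 := h2
          _ ≤ ((1 / 2 : ℝ) ^ m * ‖p N0 - pbar‖) / 2 := by linarith
          _ = (1 / 2 : ℝ) ^ (m + 1) * ‖p N0 - pbar‖ := by rw [pow_succ]; ring
  have htend : Tendsto p atTop (nhds pbar) := by
    rw [← tendsto_add_atTop_iff_nat N0, tendsto_iff_norm_sub_tendsto_zero]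
    have hg : Tendsto (fun n => (1 / 2 : ℝ) ^ n * ‖p N0 - pbar‖) atTop (nhds 0) := by
      have := (tendsto_pow_atTop_nhds_zero_of_lt_one (by norm_num : (0:ℝ) ≤ 1/2)
        (by norm_num : (1/2:ℝ) < 1)).mul_const ‖p N0 - pbar‖
      simpa using this
    apply squeeze_zero (fun n => norm_nonneg _) (fun n => ?_) hg
    have := (hind n).2
    rwa [Nat.add_comm] at this
  refine ⟨htend, K, hKpos, N0, fun k hk => ?_⟩
  obtain ⟨m, rfl⟩ := Nat.exists_eq_add_of_le hk
  exact (key (N0 + m) (hind m).1).1
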